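/- Let g : ℝ → ℝ be C¹ with g(0) = 0, and suppose g'(s) ≥ −κ₁ + κ₂|s|^{q-1} for all s, where κ₁, κ₂ > 0 and q ≥ 3. Let G(s) = ∫₀ˢ g(τ) dτ. Then there exists δ_q > 0 depending only on q and κ₂ such that for all v, z ∈ ℝ: G(v+z) − G(v) − g(v)z ≥ −κ₁|z|² + δ_q |z|² (|v|^{q-1} + |z|^{q-1}). -/

import Mathlib

open intervalIntegral MeasureTheory

set_option maxHeartbeats 1000000 in
lemma primitive_lower_bound_aux
    (g : ℝ → ℝ) (κ₁ κ₂ q : ℝ)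
    (hg : ContDiff ℝ 1 g)
    (hκ₁ : 0 < κ₁) (hκ₂ : 0 < κ₂) (hq : 3 ≤ q)
    (hg' : ∀ s : ℝ, deriv g s ≥ -κ₁ + κ₂ * |s| ^ (q - 1))
    (G : ℝ → ℝ) (hG : ∀ s : ℝ, G s = ∫ τ in (0:ℝ)..s, g τ)
    (v z : ℝ) (hz : 0 ≤ z) :
    G (v + z) - G v - g v * z ≥
      -κ₁ * |z| ^ 2 + (κ₂ / (2:ℝ) ^ (6*q)) * |z| ^ 2 * (|v| ^ (q - 1) + |z| ^ (q - 1)) := by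
  set p : ℝ := q - 1 with hpdef
  have hp2 : 2 ≤ p := by simp [hpdef]; linarith
  have hp0 : (0:ℝ) ≤ p := by linarith
  rcases eq_or_lt_of_le hz with hz0 | hzpos
  · subst hz0  -- wrong direction maybe
    simp
  have hzabs : |z| = z := abs_of_nonneg hz
  rw [hzabs]
  have hgc : Continuous g := hg.continuous
  have hg'c : Continuous (deriv g) := hg.continuous_deriv le_rfl
  have hgd : Differentiable ℝ g := hg.differentiable one_ne_zero
  have habs : Continuous fun τ => |v + τ| ^ p :=
    (continuous_const.add continuous_id).abs.rpow_const fun x => Or.inr hp0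
  set I : ℝ → ℝ := fun t => ∫ τ in (0:ℝ)..t, |v + τ| ^ p with hIdef
  have hIsub : ∀ a b : ℝ, I b - I a = ∫ τ in a..b, |v + τ| ^ p := by
    intro a b
    exact intervalIntegral.integral_interval_sub_left
      (habs.intervalIntegrable _ _) (habs.intervalIntegrable _ _)
  have hImono : Monotone I := by
    intro a b hab
    have h1 := hIsub a b
    have h2 : 0 ≤ ∫ τ in a..b, |v + τ| ^ p :=
      intervalIntegral.integral_nonneg hab fun u _ => Real.rpow_nonneg (abs_nonneg _) p
    linarith
  have hIinteg : ∀ a b : ℝ, IntervalIntegrable I volume a b := fun a b =>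
    (hImono.monotoneOn _).intervalIntegrable
  have hI0 : I 0 = 0 := intervalIntegral.integral_same
  have hInonneg : ∀ t, 0 ≤ t → 0 ≤ I t := fun t ht => hI0 ▸ hImono ht
  -- Step 1: LHS as a single integral
  have step1 : G (v + z) - G v - g v * z = ∫ t in (0:ℝ)..z, (g (v + t) - g v) := by
    have e1 : G (v + z) - G v = ∫ t in (0:ℝ)..z, g (v + t) := by
      rw [hG, hG, intervalIntegral.integral_comp_add_left g v,
        intervalIntegral.integral_interval_sub_left
          (hgc.intervalIntegrable _ _) (hgc.intervalIntegrable _ _)]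
      · norm_num
    have e2 : ∫ t in (0:ℝ)..z, (g (v + t) - g v)
        = (∫ t in (0:ℝ)..z, g (v + t)) - ∫ t in (0:ℝ)..z, g v :=
      intervalIntegral.integral_sub
        ((hgc.comp (continuous_const.add continuous_id)).intervalIntegrable _ _)
        (intervalIntegrable_const)
    rw [e2, intervalIntegral.integral_const, ← e1]
    ring_nf
  -- Step 3: pointwise lower bound on the integrand
  have step3 : ∀ t ∈ Set.Icc (0:ℝ) z, -κ₁ * t + κ₂ * I t ≤ g (v + t) - g v := by
    intro t ht
    have ftc : ∫ τ in v..(v + t), deriv g τ = g (v + t) - g v :=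
      intervalIntegral.integral_deriv_eq_sub (fun x _ => hgd x)
        (hg'c.intervalIntegrable _ _)
    have comp : ∫ τ in (0:ℝ)..t, deriv g (v + τ) = ∫ τ in v..(v + t), deriv g τ := by
      rw [intervalIntegral.integral_comp_add_left (deriv g) v]; norm_num
    have mono : (∫ τ in (0:ℝ)..t, (-κ₁ + κ₂ * |v + τ| ^ p))
        ≤ ∫ τ in (0:ℝ)..t, deriv g (v + τ) := by
      refine intervalIntegral.integral_mono_on ht.1
        ((continuous_const.add (continuous_const.mul habs)).intervalIntegrable _ _)
        ((hg'c.comp (continuous_const.add continuous_id)).intervalIntegrable _ _)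
        fun τ _ => hg' (v + τ)
    have eval : (∫ τ in (0:ℝ)..t, (-κ₁ + κ₂ * |v + τ| ^ p)) = -κ₁ * t + κ₂ * I t := by
      rw [intervalIntegral.integral_add (f := fun _ => -κ₁) (g := fun τ => κ₂ * |v + τ| ^ p)
        intervalIntegrable_const
        ((continuous_const.mul habs).intervalIntegrable _ _),
        intervalIntegral.integral_const, intervalIntegral.integral_const_mul]
      simp [smul_eq_mul, hIdef]
      ring
    rw [← ftc, ← comp]
    linarith [eval ▸ mono]
  -- Step 5: integrate the bound
  have hlin : Continuous fun t : ℝ => -κ₁ * t := by fun_prop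
  have hlow_integ : IntervalIntegrable (fun t => -κ₁ * t + κ₂ * I t) volume 0 z :=
    (hlin.intervalIntegrable _ _).add ((hIinteg 0 z).const_mul κ₂)
  have step5 : (∫ t in (0:ℝ)..z, (-κ₁ * t + κ₂ * I t))
      ≤ ∫ t in (0:ℝ)..z, (g (v + t) - g v) :=
    intervalIntegral.integral_mono_on hz hlow_integ
      (((hgc.comp (continuous_const.add continuous_id)).sub continuous_const).intervalIntegrable _ _)
      step3
  -- Step 6: evaluate
  have step6 : (∫ t in (0:ℝ)..z, (-κ₁ * t + κ₂ * I t))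
      = -κ₁ * (z ^ 2 / 2) + κ₂ * ∫ t in (0:ℝ)..z, I t := by
    rw [intervalIntegral.integral_add (hlin.intervalIntegrable _ _)
        ((hIinteg 0 z).const_mul κ₂),
      intervalIntegral.integral_const_mul, intervalIntegral.integral_const_mul,
      integral_id]
    norm_num
  -- Step 7: lower bound ∫ I by (z/2) * I (z/2)
  have step7 : z / 2 * I (z / 2) ≤ ∫ t in (0:ℝ)..z, I t := by
    have split : (∫ t in (0:ℝ)..z, I t)
        = (∫ t in (0:ℝ)..(z/2), I t) + ∫ t in (z/2)..z, I t :=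
      (intervalIntegral.integral_add_adjacent_intervals (hIinteg 0 (z/2)) (hIinteg (z/2) z)).symm
    have h1 : 0 ≤ ∫ t in (0:ℝ)..(z/2), I t :=
      intervalIntegral.integral_nonneg (by linarith) fun t ht => hInonneg t ht.1
    have h2 : (z - z/2) * I (z/2) ≤ ∫ t in (z/2)..z, I t := by
      have := intervalIntegral.integral_mono_on (by linarith : z/2 ≤ z)
        (intervalIntegrable_const) (hIinteg (z/2) z) (fun t ht => hImono ht.1)
      rwa [intervalIntegral.integral_const, smul_eq_mul] at this
    have : z - z/2 = z/2 := by ring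
    rw [this] at h2
    linarith
  -- Step 8: interval bound for I (z/2)
  have key : ∀ a b m : ℝ, 0 ≤ a → a ≤ b → b ≤ z/2 → 0 ≤ m →
      (∀ τ ∈ Set.Icc a b, m ≤ |v + τ|) → (b - a) * m ^ p ≤ I (z/2) := by
    intro a b m h0a hab hbc hm h
    have h1 : I b - I a = ∫ τ in a..b, |v + τ| ^ p := hIsub a b
    have h2 : (b - a) * m ^ p ≤ ∫ τ in a..b, |v + τ| ^ p := by
      have := intervalIntegral.integral_mono_on (μ := MeasureTheory.volume) hab
        intervalIntegrable_const (habs.intervalIntegrable _ _)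
        (fun τ hτ => Real.rpow_le_rpow hm (h τ hτ) hp0)
      rwa [intervalIntegral.integral_const, smul_eq_mul] at this
    have h3 : I b ≤ I (z/2) := hImono hbc
    have h4 : 0 ≤ I a := hInonneg a h0a
    linarith
  -- Power arithmetic
  have two1 : (1:ℝ) ≤ 2 := one_le_two
  have hA1 : (1:ℝ) ≤ (2:ℝ) ^ p := by
    have := Real.rpow_le_rpow_of_exponent_le two1 hp0
    rwa [Real.rpow_zero] at this
  have hApos : (0:ℝ) < (2:ℝ) ^ p := by positivity
  have hTpos : (0:ℝ) < (2:ℝ) ^ (3*p) := by positivity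
  have hWpos : (0:ℝ) < (2:ℝ) ^ (6*q) := by positivity
  have h8 : (8:ℝ) = (2:ℝ) ^ (3:ℝ) := by
    rw [show (3:ℝ) = ((3:ℕ):ℝ) by norm_num, Real.rpow_natCast]; norm_num
  -- main ineq: z^2 * (|v|^p + z^p) ≤ 2^(6q) * (z/2 * I (z/2))
  have main : z ^ 2 * (|v| ^ p + z ^ p) ≤ (2:ℝ) ^ (6*q) * (z / 2 * I (z/2)) := by
    rcases le_or_gt (2*z) |v| with hcase | hcase
    · -- |v| large
      have hD : (z/2 - 0) * (|v|/2) ^ p ≤ I (z/2) := by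
        refine key 0 (z/2) (|v|/2) le_rfl (by linarith) le_rfl (by positivity) ?_
        intro τ hτ
        have h1 : |v| - |τ| ≤ |v + τ| := by
          have := abs_sub_abs_le_abs_sub v (-τ)
          simp at this
          calc |v| - |τ| = |v| - |-τ| := by rw [abs_neg]
            _ ≤ |v - -τ| := abs_sub_abs_le_abs_sub v (-τ)
            _ = |v + τ| := by ring_nf
        have h2 : |τ| ≤ z/2 := by
          rw [abs_of_nonneg hτ.1]; exact hτ.2
        have : z/2 ≤ |v|/2 := by linarith
        linarith
      set V : ℝ := (|v|/2) ^ p with hVdef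
      have hV0 : 0 ≤ V := Real.rpow_nonneg (by positivity) p
      have hveq : |v| ^ p = (2:ℝ) ^ p * V := by
        rw [hVdef, ← Real.mul_rpow (by norm_num) (by positivity),
          show (2:ℝ) * (|v| / 2) = |v| by ring]
      have hzv : z ^ p ≤ |v| ^ p := by
        refine Real.rpow_le_rpow hz (by linarith) hp0
      have hW : (2:ℝ) ^ p * 8 ≤ (2:ℝ) ^ (6*q) := by
        rw [h8, ← Real.rpow_add (by norm_num)]
        exact Real.rpow_le_rpow_of_exponent_le two1 (by simp [hpdef]; linarith)
      -- z^2 * (|v|^p + z^p) ≤ 2 z^2 * (2^p V) = 2^p * 8 * (z^2/4 * V) ≤ 2^(6q) * (z/2 * I(z/2))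
      have c1 : z ^ 2 * (|v| ^ p + z ^ p) ≤ (2:ℝ) ^ p * 8 * (z^2/4 * V) := by
        rw [hveq] at hzv ⊢
        have h := mul_le_mul_of_nonneg_left hzv (sq_nonneg z)
        linarith [h]
      have c2 : (2:ℝ) ^ p * 8 * (z^2/4 * V) ≤ (2:ℝ) ^ (6*q) * (z^2/4 * V) :=
        mul_le_mul_of_nonneg_right hW (by positivity)
      have c3 : (2:ℝ) ^ (6*q) * (z^2/4 * V) ≤ (2:ℝ) ^ (6*q) * (z / 2 * I (z/2)) := by
        refine mul_le_mul_of_nonneg_left ?_ hWpos.le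
        have h2 : z/2 * ((z/2 - 0) * V) ≤ z/2 * I (z/2) :=
          mul_le_mul_of_nonneg_left hD (by linarith)
        have : z^2/4 * V = z/2 * ((z/2 - 0) * V) := by ring
        linarith
      linarith
    · -- |v| < 2z
      have hD : ∃ a b : ℝ, 0 ≤ a ∧ a ≤ b ∧ b ≤ z/2 ∧ b - a = z/8 ∧
          ∀ τ ∈ Set.Icc a b, z/8 ≤ |v + τ| := by
        rcases le_or_gt (z/4) |v| with hsub | hsub
        · refine ⟨0, z/8, by norm_num, by linarith, by linarith, by ring, ?_⟩
          intro τ hτ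
          have h1 : |v| - |τ| ≤ |v + τ| := by
            calc |v| - |τ| = |v| - |-τ| := by rw [abs_neg]
              _ ≤ |v - -τ| := abs_sub_abs_le_abs_sub v (-τ)
              _ = |v + τ| := by ring_nf
          have h2 : |τ| ≤ z/8 := by rw [abs_of_nonneg hτ.1]; exact hτ.2
          linarith
        · refine ⟨3*z/8, z/2, by linarith, by linarith, le_rfl, by ring, ?_⟩
          intro τ hτ
          have h1 : |τ| - |v| ≤ |v + τ| := by
            calc |τ| - |v| = |τ| - |-v| := by rw [abs_neg]
              _ ≤ |τ - -v| := abs_sub_abs_le_abs_sub τ (-v)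
              _ = |v + τ| := by rw [sub_neg_eq_add, add_comm]
          have h2 : 3*z/8 ≤ |τ| := by
            rw [abs_of_nonneg (by linarith [hτ.1] : (0:ℝ) ≤ τ)]; exact hτ.1
          linarith
      obtain ⟨a, b, h0a, hab, hbz, hba, hbound⟩ := hD
      have hDle : (z/8) * (z/8) ^ p ≤ I (z/2) := by
        have := key a b (z/8) h0a hab hbz (by linarith) hbound
        rwa [hba] at this
      set Y : ℝ := (z/8) ^ p with hYdef
      have hY0 : 0 ≤ Y := Real.rpow_nonneg (by linarith) p
      have hzY : z ^ p = (2:ℝ) ^ (3*p) * Y := by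
        have e : (2:ℝ) ^ (3*p) = (8:ℝ) ^ p := by
          rw [Real.rpow_mul (by norm_num : (0:ℝ) ≤ 2), ← h8]
        rw [hYdef, e, ← Real.mul_rpow (by norm_num) (by linarith),
          show (8:ℝ) * (z/8) = z by ring]
      have hvY : |v| ^ p ≤ (2:ℝ) ^ p * ((2:ℝ) ^ (3*p) * Y) := by
        have h1 : |v| ^ p ≤ (2*z) ^ p :=
          Real.rpow_le_rpow (abs_nonneg v) hcase.le hp0
        have h2 : (2*z) ^ p = (2:ℝ) ^ p * z ^ p := Real.mul_rpow (by norm_num) hz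
        rw [h2, hzY] at h1
        linarith [h1]
      have hW : (2:ℝ) ^ p * ((2:ℝ) ^ (3*p)) * 32 ≤ (2:ℝ) ^ (6*q) := by
        have h32 : (32:ℝ) = (2:ℝ) ^ (5:ℝ) := by
          rw [show (5:ℝ) = ((5:ℕ):ℝ) by norm_num, Real.rpow_natCast]; norm_num
        rw [h32, ← Real.rpow_add (by norm_num), ← Real.rpow_add (by norm_num)]
        exact Real.rpow_le_rpow_of_exponent_le two1 (by simp [hpdef]; linarith)
      -- z^2 (|v|^p + z^p) ≤ z^2 (2^p 2^{3p} Y + 2^{3p} Y) ≤ 2 * 2^p * 2^{3p} * z^2 Y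
      --   = 2^p 2^{3p} 32 * (z^2/16 Y) ≤ 2^{6q} (z/2 * I(z/2))
      have c1 : z ^ 2 * (|v| ^ p + z ^ p) ≤ (2:ℝ) ^ p * ((2:ℝ) ^ (3*p)) * 32 * (z^2/16 * Y) := by
        rw [hzY]
        have h1 := mul_le_mul_of_nonneg_left hvY (sq_nonneg z)
        have h2 := mul_le_mul_of_nonneg_left hA1
          (mul_nonneg (mul_nonneg (sq_nonneg z) hTpos.le) hY0)
        linarith [h1, h2]
      have c2 : (2:ℝ) ^ p * ((2:ℝ) ^ (3*p)) * 32 * (z^2/16 * Y) ≤ (2:ℝ) ^ (6*q) * (z^2/16 * Y) :=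
        mul_le_mul_of_nonneg_right hW (by positivity)
      have c3 : (2:ℝ) ^ (6*q) * (z^2/16 * Y) ≤ (2:ℝ) ^ (6*q) * (z / 2 * I (z/2)) := by
        refine mul_le_mul_of_nonneg_left ?_ hWpos.le
        have h2 : z/2 * ((z/8) * (z/8) ^ p) ≤ z/2 * I (z/2) :=
          mul_le_mul_of_nonneg_left hDle (by linarith)
        have : z^2/16 * Y = z/2 * ((z/8) * (z/8) ^ p) := by rw [hYdef]; ring
        linarith
      linarith
  -- conclude
  have chain : -κ₁ * (z ^ 2 / 2) + κ₂ * (z / 2 * I (z/2)) ≤ G (v + z) - G v - g v * z := by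
    rw [step1]
    have := step6 ▸ step5
    have h7 : κ₂ * (z / 2 * I (z/2)) ≤ κ₂ * ∫ t in (0:ℝ)..z, I t :=
      mul_le_mul_of_nonneg_left step7 hκ₂.le
    linarith
  rw [ge_iff_le]
  have hfin : (κ₂ / (2:ℝ) ^ (6*q)) * z ^ 2 * (|v| ^ p + z ^ p) ≤ κ₂ * (z / 2 * I (z/2)) := by
    rw [div_mul_eq_mul_div, div_mul_eq_mul_div, div_le_iff₀ hWpos]
    calc κ₂ * z ^ 2 * (|v| ^ p + z ^ p) = κ₂ * (z ^ 2 * (|v| ^ p + z ^ p)) := by ring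
      _ ≤ κ₂ * ((2:ℝ) ^ (6*q) * (z / 2 * I (z/2))) := mul_le_mul_of_nonneg_left main hκ₂.le
      _ = κ₂ * (z / 2 * I (z/2)) * (2:ℝ) ^ (6*q) := by ring
  have hk : κ₁ * (z^2/2) ≤ κ₁ * z^2 := by
    have : 0 ≤ κ₁ * (z^2/2) := by positivity
    linarith
  linarith

/-- Lower convexity-type bound for the primitive G of g under the dissipativity
    condition g'(s) ≥ -κ₁ + κ₂|s|^{q-1}. -/
theorem primitive_lower_bound
    (g : ℝ → ℝ) (κ₁ κ₂ q : ℝ)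
    (hg : ContDiff ℝ 1 g) (hg0 : g 0 = 0)
    (hκ₁ : 0 < κ₁) (hκ₂ : 0 < κ₂) (hq : 3 ≤ q)
    (hg' : ∀ s : ℝ, deriv g s ≥ -κ₁ + κ₂ * |s| ^ (q - 1))
    (G : ℝ → ℝ) (hG : ∀ s : ℝ, G s = ∫ τ in (0:ℝ)..s, g τ) :
    ∃ δ > 0, ∀ v z : ℝ,
      G (v + z) - G v - g v * z ≥
        -κ₁ * |z| ^ 2 + δ * |z| ^ 2 * (|v| ^ (q - 1) + |z| ^ (q - 1)) := by
  refine ⟨κ₂ / (2:ℝ) ^ (6*q), by positivity, ?_⟩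
  intro v z
  rcases le_or_gt 0 z with hz | hz
  · exact primitive_lower_bound_aux g κ₁ κ₂ q hg hκ₁ hκ₂ hq hg' G hG v z hz
  · have hg2c : ContDiff ℝ 1 (fun s => -g (-s)) := (hg.comp contDiff_neg).neg
    have hg2d : ∀ s : ℝ, deriv (fun s => -g (-s)) s ≥ -κ₁ + κ₂ * |s| ^ (q - 1) := by
      intro s
      have h1 : deriv (fun s => -g (-s)) s = -deriv (fun s => g (-s)) s := deriv.neg
      rw [h1, deriv_comp_neg, neg_neg]
      simpa [abs_neg] using hg' (-s)
    have hG2eq : ∀ s : ℝ, G (-s) = ∫ τ in (0:ℝ)..s, (fun σ => -g (-σ)) τ := by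
      intro s
      show G (-s) = ∫ τ in (0:ℝ)..s, -g (-τ)
      rw [intervalIntegral.integral_neg, intervalIntegral.integral_comp_neg g, neg_zero,
        hG, intervalIntegral.integral_symm]
    have key := primitive_lower_bound_aux (fun s => -g (-s)) κ₁ κ₂ q hg2c hκ₁ hκ₂ hq hg2d
      (fun s => G (-s)) hG2eq (-v) (-z) (by linarith)
    simp only [neg_neg, abs_neg] at key
    have e1 : -(-v + -z) = v + z := by ring
    rw [e1] at key
    have e2 : -g v * -z = g v * z := by ring
    rw [e2] at key
    exact key
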